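/- Assume a11 < 0, a12 < 0, a21 > 0, a22 < 0, and assume that for every n ∈ ℕ, with P_n = T_n² − 2J_n and Q_n = J_n² − D_n², either (P_n > 0 and Q_n > 0) or P_n² − 4Q_n < 0. Then for every delay τ ≥ 0, every n ∈ ℕ₀ and every λ ∈ ℂ with Re λ ≥ 0, one has Γ_n(λ) ≠ 0; that is, all roots of the characteristic equations of all modes have negative real parts for all τ ∈ [0, ∞). -/

import Mathlib

/-- `Tₙ = Tr(A) - Tr(D₁) n²/ℓ²`. -/
noncomputable def Tn (ℓ d11 d22 a11 a22 : ℝ) (n : ℕ) : ℝ :=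
  (a11 + a22) - (d11 + d22) * (n : ℝ) ^ 2 / ℓ ^ 2

/-- `Jₙ = d11 d22 n⁴/ℓ⁴ - (d11 a22 + d22 a11 - a21 ξ u*) n²/ℓ² + Det(A)`. -/
noncomputable def Jn (ℓ d11 d22 ξ ustar a11 a12 a21 a22 : ℝ) (n : ℕ) : ℝ :=
  d11 * d22 * (n : ℝ) ^ 4 / ℓ ^ 4
    - (d11 * a22 + d22 * a11 - a21 * ξ * ustar) * (n : ℝ) ^ 2 / ℓ ^ 2
    + (a11 * a22 - a12 * a21)

/-- `Dₙ = d21 ξ u* v* n⁴/ℓ⁴ - d21 v* a12 n²/ℓ²`. -/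
noncomputable def Dn (ℓ d21 ξ ustar vstar a12 : ℝ) (n : ℕ) : ℝ :=
  d21 * ξ * ustar * vstar * (n : ℝ) ^ 4 / ℓ ^ 4 - d21 * vstar * a12 * (n : ℝ) ^ 2 / ℓ ^ 2

/-- The characteristic function of mode `n` at delay `τ`:
`Γ(λ) = λ² - Tλ + J + D e^{-λτ}`. -/
noncomputable def Gamma (T J D τ : ℝ) (lam : ℂ) : ℂ :=
  lam ^ 2 - (T : ℂ) * lam + (J : ℂ) + (D : ℂ) * Complex.exp (-lam * (τ : ℂ))

/-- Key abstract lemma: if `T < 0`, `J > 0` and the quartic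
`y⁴ + (T² - 2J) y² + (J² - D²)` is positive for all real `y`, then `Γ` has no
roots with nonnegative real part, for any delay `τ ≥ 0`. -/
lemma gamma_ne_zero_of_quartic_pos (T J D τ : ℝ) (hT : T < 0) (hJ : 0 < J) (hτ : 0 ≤ τ)
    (hg : ∀ y : ℝ, 0 < y ^ 4 + (T ^ 2 - 2 * J) * y ^ 2 + (J ^ 2 - D ^ 2)) :
    ∀ lam : ℂ, 0 ≤ lam.re → Gamma T J D τ lam ≠ 0 := by
  intro lam hre h0
  set x := lam.re with hx
  set y := lam.im with hy
  have heq : lam ^ 2 - (T : ℂ) * lam + (J : ℂ)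
      = -(D : ℂ) * Complex.exp (-lam * (τ : ℂ)) := by
    unfold Gamma at h0
    linear_combination h0
  have h1 : Complex.normSq (lam ^ 2 - (T : ℂ) * lam + (J : ℂ))
      = D ^ 2 * Real.exp (-(x * τ)) ^ 2 := by
    rw [heq, Complex.normSq_mul, Complex.normSq_eq_norm_sq, Complex.normSq_eq_norm_sq,
      Complex.norm_exp, norm_neg]
    have hre' : (-lam * (τ : ℂ)).re = -(x * τ) := by
      simp [Complex.mul_re, x]
    rw [hre']
    simp [Complex.sq_norm, Complex.normSq_ofReal]
  have h2 : Complex.normSq (lam ^ 2 - (T : ℂ) * lam + (J : ℂ))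
      = (x ^ 2 - y ^ 2 - T * x + J) ^ 2 + (2 * x * y - T * y) ^ 2 := by
    have hl : lam ^ 2 = lam * lam := sq lam
    simp only [Complex.normSq_apply, hl, Complex.sub_re, Complex.sub_im, Complex.add_re,
      Complex.add_im, Complex.mul_re, Complex.mul_im, Complex.ofReal_re, Complex.ofReal_im,
      ← hx, ← hy]
    ring
  have hexp : Real.exp (-(x * τ)) ≤ 1 := by
    apply Real.exp_le_one_iff.mpr
    have : 0 ≤ x * τ := mul_nonneg hre hτ
    linarith
  have hexppos : 0 < Real.exp (-(x * τ)) := Real.exp_pos _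
  have hb : D ^ 2 * Real.exp (-(x * τ)) ^ 2 ≤ D ^ 2 := by
    have he2 : Real.exp (-(x * τ)) ^ 2 ≤ 1 := by nlinarith
    calc D ^ 2 * Real.exp (-(x * τ)) ^ 2 ≤ D ^ 2 * 1 :=
          mul_le_mul_of_nonneg_left he2 (sq_nonneg D)
      _ = D ^ 2 := by ring
  have hinner : 0 ≤ x ^ 2 - T * x + 2 * J + 2 * y ^ 2 := by
    nlinarith [sq_nonneg x, sq_nonneg y, mul_nonneg (neg_nonneg.mpr hT.le) hre]
  have h4 : 0 ≤ x * (x - T) * (x ^ 2 - T * x + 2 * J + 2 * y ^ 2) :=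
    mul_nonneg (mul_nonneg hre (by linarith)) hinner
  have hkey : D ^ 2 < (x ^ 2 - y ^ 2 - T * x + J) ^ 2 + (2 * x * y - T * y) ^ 2 := by
    nlinarith [hg y, h4]
  rw [h2] at h1
  linarith

/-- Under the sign conditions, if for every `n ≥ 1` either
(`Pₙ > 0` and `Qₙ > 0`) or `Pₙ² - 4Qₙ < 0`, then for every delay `τ ≥ 0`, every
mode `n ∈ ℕ₀` and every `λ` with `Re λ ≥ 0`, one has `Γₙ(λ) ≠ 0`. -/
theorem stmt_19 (ℓ d11 d22 d21 ξ ustar vstar a11 a12 a21 a22 : ℝ)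
    (hℓ : 0 < ℓ) (h11 : 0 ≤ d11) (h22 : 0 ≤ d22) (h21 : 0 ≤ d21) (hξ : 0 ≤ ξ)
    (hu : 0 < ustar) (hv : 0 < vstar)
    (ha11 : a11 < 0) (ha12 : a12 < 0) (ha21 : 0 < a21) (ha22 : a22 < 0)
    (hPQ : ∀ n : ℕ, 1 ≤ n →
      (0 < (Tn ℓ d11 d22 a11 a22 n) ^ 2 - 2 * Jn ℓ d11 d22 ξ ustar a11 a12 a21 a22 n ∧
       0 < (Jn ℓ d11 d22 ξ ustar a11 a12 a21 a22 n) ^ 2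
          - (Dn ℓ d21 ξ ustar vstar a12 n) ^ 2) ∨
      ((Tn ℓ d11 d22 a11 a22 n) ^ 2 - 2 * Jn ℓ d11 d22 ξ ustar a11 a12 a21 a22 n) ^ 2
        - 4 * ((Jn ℓ d11 d22 ξ ustar a11 a12 a21 a22 n) ^ 2
            - (Dn ℓ d21 ξ ustar vstar a12 n) ^ 2) < 0) :
    ∀ τ : ℝ, 0 ≤ τ → ∀ n : ℕ, ∀ lam : ℂ, 0 ≤ lam.re →
      Gamma (Tn ℓ d11 d22 a11 a22 n) (Jn ℓ d11 d22 ξ ustar a11 a12 a21 a22 n)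
        (Dn ℓ d21 ξ ustar vstar a12 n) τ lam ≠ 0 := by
  intro τ hτ n
  have hT : Tn ℓ d11 d22 a11 a22 n < 0 := by
    unfold Tn
    have : 0 ≤ (d11 + d22) * (n : ℝ) ^ 2 / ℓ ^ 2 := by positivity
    linarith
  have hJ : 0 < Jn ℓ d11 d22 ξ ustar a11 a12 a21 a22 n := by
    unfold Jn
    have h1 : 0 ≤ d11 * d22 * (n : ℝ) ^ 4 / ℓ ^ 4 := by positivity
    have hc : d11 * a22 + d22 * a11 - a21 * ξ * ustar ≤ 0 := by
      have g1 : 0 ≤ d11 * (-a22) := mul_nonneg h11 (by linarith)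
      have g2 : 0 ≤ d22 * (-a11) := mul_nonneg h22 (by linarith)
      have g3 : 0 ≤ a21 * ξ * ustar := by positivity
      nlinarith
    have h2 : 0 ≤ -((d11 * a22 + d22 * a11 - a21 * ξ * ustar)) * (n : ℝ) ^ 2 / ℓ ^ 2 :=
      div_nonneg (mul_nonneg (neg_nonneg.mpr hc) (sq_nonneg _)) (sq_nonneg ℓ)
    have h2' : -((d11 * a22 + d22 * a11 - a21 * ξ * ustar)) * (n : ℝ) ^ 2 / ℓ ^ 2
        = -((d11 * a22 + d22 * a11 - a21 * ξ * ustar) * (n : ℝ) ^ 2 / ℓ ^ 2) := by ring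
    rw [h2'] at h2
    have h3 : 0 < a11 * a22 - a12 * a21 := by
      have := mul_pos_of_neg_of_neg ha11 ha22
      have := mul_neg_of_neg_of_pos ha12 ha21
      linarith
    linarith
  apply gamma_ne_zero_of_quartic_pos _ _ _ _ hT hJ hτ
  intro y
  rcases Nat.eq_zero_or_pos n with hn | hn
  · subst hn
    have hD0 : Dn ℓ d21 ξ ustar vstar a12 0 = 0 := by simp [Dn]
    rw [hD0]
    have hT2 : 0 < (Tn ℓ d11 d22 a11 a22 0) ^ 2 := pow_two_pos_of_ne_zero hT.ne
    rcases eq_or_ne y 0 with hy | hy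
    · subst hy
      have := pow_pos hJ 2
      nlinarith
    · have hy2 : 0 < y ^ 2 := pow_two_pos_of_ne_zero hy
      nlinarith [sq_nonneg (y ^ 2 - Jn ℓ d11 d22 ξ ustar a11 a12 a21 a22 0),
        mul_pos hT2 hy2]
  · rcases hPQ n hn with ⟨hP, hQ⟩ | hlt
    · nlinarith [mul_nonneg hP.le (sq_nonneg y), sq_nonneg (y ^ 2)]
    · nlinarith [sq_nonneg (y ^ 2 + ((Tn ℓ d11 d22 a11 a22 n) ^ 2
        - 2 * Jn ℓ d11 d22 ξ ustar a11 a12 a21 a22 n) / 2)]
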